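/- Fix γ > 1/2 and m ∈ ℕ₀, and for λ > 0 and j ∈ ℕ₀ set A_j(λ) = ∑_{i=1}^∞ i^{2j} e^{-2γi}/(λ + e^{-2γi}). There exists a constant C > 0, not depending on λ, such that for every λ ∈ (0, e^{-1}] and every real sequence (f_i)_{i≥1} with ∑_{i=1}^∞ f_i² (λ + e^{-2γi}) e^{2γi} < ∞, one has A_0(λ) · ∑_{i=1}^∞ f_i² i^{2m} ≤ C · A_m(λ) · ∑_{i=1}^∞ f_i² (λ + e^{-2γi}) e^{2γi}. -/

import Mathlib

lemma pow_mul_exp_neg_le (k : ℕ) (c s : ℝ) (hc : 0 < c) (hs : 0 ≤ s) :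
    s ^ k * Real.exp (-(c * s)) ≤ ((k : ℝ) / c) ^ k := by
  rcases Nat.eq_zero_or_pos k with h | h
  · simp only [h, pow_zero, one_mul]
    exact Real.exp_le_one_iff.mpr (by nlinarith)
  · have hk : (0:ℝ) < k := by exact_mod_cast h
    have h1 : c * s / k ≤ Real.exp (c * s / k - 1) := by
      have := Real.add_one_le_exp (c * s / k - 1)
      linarith
    have h2 : (c * s / k) ^ k ≤ Real.exp (c * s) := by
      calc (c * s / k) ^ k ≤ Real.exp (c * s / k - 1) ^ k :=
            pow_le_pow_left₀ (by positivity) h1 k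
        _ = Real.exp ((c * s / k - 1) * k) := by rw [← Real.exp_nat_mul]; ring_nf
        _ ≤ Real.exp (c * s) := by
            apply Real.exp_le_exp.mpr
            have : (c * s / k - 1) * k = c * s - k := by field_simp
            rw [this]; linarith
    have key : s ^ k ≤ ((k : ℝ) / c) ^ k * Real.exp (c * s) := by
      have : ((k : ℝ) / c) ^ k * (c * s / k) ^ k = s ^ k := by
        rw [← mul_pow]; congr 1; field_simp
      calc s ^ k = ((k : ℝ) / c) ^ k * (c * s / k) ^ k := this.symm
        _ ≤ ((k : ℝ) / c) ^ k * Real.exp (c * s) := by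
            apply mul_le_mul_of_nonneg_left h2 (by positivity)
    calc s ^ k * Real.exp (-(c * s)) ≤ ((k : ℝ) / c) ^ k * Real.exp (c * s) * Real.exp (-(c * s)) := by
          apply mul_le_mul_of_nonneg_right key (Real.exp_nonneg _)
      _ = ((k : ℝ) / c) ^ k := by rw [mul_assoc, ← Real.exp_add]; simp

lemma pow_succ_sub_le (k : ℕ) : ∀ a b : ℝ, 0 ≤ b → b ≤ a →
    a ^ (k + 1) ≤ b ^ (k + 1) + ((k : ℝ) + 1) * (a - b) * a ^ k := by
  induction k with
  | zero =>
    intro a b hb hab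
    simp only [pow_one, pow_zero, Nat.cast_zero, mul_one, zero_add, one_mul]
    linarith
  | succ k ih =>
    intro a b hb hab
    have ha : 0 ≤ a := le_trans hb hab
    have h1 := ih a b hb hab
    have h2 : a ^ (k + 2) ≤ a * (b ^ (k + 1) + ((k : ℝ) + 1) * (a - b) * a ^ k) := by
      calc a ^ (k + 2) = a * a ^ (k + 1) := by ring
        _ ≤ a * (b ^ (k + 1) + ((k : ℝ) + 1) * (a - b) * a ^ k) :=
            mul_le_mul_of_nonneg_left h1 ha
    have h3 : a * b ^ (k + 1) ≤ b ^ (k + 2) + (a - b) * a ^ (k + 1) := by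
      have hbk : b ^ (k + 1) ≤ a ^ (k + 1) := pow_le_pow_left₀ hb hab _
      have : a * b ^ (k+1) = b ^ (k+2) + (a - b) * b ^ (k+1) := by ring
      rw [this]
      have := mul_le_mul_of_nonneg_left hbk (by linarith : (0:ℝ) ≤ a - b)
      linarith
    have h5 : a * (b ^ (k+1) + ((k:ℝ)+1)*(a-b)*a^k) = a*b^(k+1) + ((k:ℝ)+1)*((a-b)*a^(k+1)) := by ring
    push_cast
    nlinarith [h2, h3, h5]

lemma sum_pow_ge (k N : ℕ) :
    (N : ℝ) ^ (k + 1) ≤ ((k : ℝ) + 1) * ∑ i ∈ Finset.range N, ((i : ℝ) + 1) ^ k := by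
  induction N with
  | zero => simp
  | succ N ih =>
    rw [Finset.sum_range_succ]
    have h := pow_succ_sub_le k ((N : ℝ) + 1) (N : ℝ) (by positivity) (by linarith)
    push_cast
    push_cast at ih h
    nlinarith [pow_nonneg (by positivity : (0:ℝ) ≤ (N:ℝ)+1) k]

lemma summable_aux (c : ℝ) (hc : 0 < c) (k : ℕ) :
    Summable (fun i : ℕ => ((i : ℝ) + 1) ^ k * Real.exp (-c * ((i : ℝ) + 1))) := by
  have hr : ‖Real.exp (-c)‖ < 1 := by
    rw [Real.norm_eq_abs, abs_of_nonneg (Real.exp_nonneg _)]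
    exact Real.exp_lt_one_iff.mpr (by linarith)
  have h := summable_pow_mul_geometric_of_norm_lt_one (r := Real.exp (-c)) k hr
  have h2 := (summable_nat_add_iff (f := fun n : ℕ => (n : ℝ) ^ k * Real.exp (-c) ^ n) 1).mpr h
  refine h2.congr (fun i => ?_)
  push_cast
  rw [← Real.exp_nat_mul]
  push_cast
  ring_nf




/-- The `j`-th order effective dimension `A_j(λ) = ∑_{i=1}^∞ i^{2j} e^{-2γi}/(λ + e^{-2γi})`
for a kernel with exponentially decaying eigenvalues `μ_i = e^{-2γi}`. -/
noncomputable def expEffDim (γ lam : ℝ) (j : ℕ) : ℝ :=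
  ∑' i : ℕ, ((i : ℝ) + 1) ^ (2 * j) * Real.exp (-2 * γ * ((i : ℝ) + 1)) /
    (lam + Real.exp (-2 * γ * ((i : ℝ) + 1)))

set_option maxHeartbeats 2000000 in
/-- Fix `γ > 1/2` and `m ∈ ℕ₀`. There exists `C > 0`, not depending on `λ`,
such that for every `λ ∈ (0, e^{-1}]` and every real sequence `(f_i)` with
`∑ f_i² (λ + e^{-2γi}) e^{2γi} < ∞`, one has
`A_0(λ) ∑ f_i² i^{2m} ≤ C A_m(λ) ∑ f_i² (λ + e^{-2γi}) e^{2γi}`. -/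
theorem deriv_norm_le_effdim_ratio_mul_rkhs_norm (γ : ℝ) (hγ : 1 / 2 < γ) (m : ℕ) :
    ∃ C : ℝ, 0 < C ∧ ∀ lam : ℝ, 0 < lam → lam ≤ Real.exp (-1) →
      ∀ f : ℕ → ℝ,
        (Summable fun i : ℕ =>
          f i ^ 2 * (lam + Real.exp (-2 * γ * ((i : ℝ) + 1))) *
            Real.exp (2 * γ * ((i : ℝ) + 1))) →
        expEffDim γ lam 0 * (∑' i : ℕ, f i ^ 2 * ((i : ℝ) + 1) ^ (2 * m)) ≤
          C * expEffDim γ lam m *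
            (∑' i : ℕ, f i ^ 2 * (lam + Real.exp (-2 * γ * ((i : ℝ) + 1))) *
              Real.exp (2 * γ * ((i : ℝ) + 1))) := by
  have hγ0 : (0:ℝ) < γ := by linarith
  have hγ2 : (0:ℝ) < 2 * γ := by linarith
  set K : ℝ := (((2*m : ℕ) : ℝ) / (2*γ)) ^ (2*m) with hKdef
  have hK0 : 0 ≤ K := by positivity
  have hlt1 : Real.exp (-(2*γ)) < 1 := Real.exp_lt_one_iff.mpr (by linarith)
  set D : ℝ := Real.exp (-(2*γ)) * (1 - Real.exp (-(2*γ)))⁻¹ with hDdef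
  have hD0 : 0 ≤ D :=
    mul_nonneg (Real.exp_nonneg _) (inv_nonneg.mpr (by linarith))
  set c4 : ℝ := Real.exp (-(2*γ)) / (Real.exp (-1) + Real.exp (-(2*γ))) with hc4def
  have hc40 : 0 < c4 := by positivity
  set c3 : ℝ := min (1 / (4^(2*m+1) * (2*(((2*m : ℕ):ℝ)+1)))) (c4 / 2^(2*m+1)) with hc3def
  have hc30 : 0 < c3 := lt_min (by positivity) (by positivity)
  set C' : ℝ := (1+D) * (1+K) * 2^(2*m) with hC'def
  have hC'0 : 0 < C' := by positivity
  refine ⟨C'/c3, by positivity, ?_⟩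
  intro lam hlam0 hlamle f hf
  simp only [expEffDim]
  set μ : ℕ → ℝ := fun i => Real.exp (-2*γ*((i:ℝ)+1)) with hμdef
  have hμpos : ∀ i, 0 < μ i := fun i => Real.exp_pos _
  have hd : ∀ i, 0 < lam + μ i := fun i => add_pos hlam0 (hμpos i)
  set a : ℕ → ℝ := fun i => μ i / (lam + μ i) with hadef
  have ha0 : ∀ i, 0 ≤ a i := fun i => div_nonneg (hμpos i).le (hd i).le
  have ha1 : ∀ i, a i ≤ 1 := fun i =>
    (div_le_one (hd i)).mpr (by linarith [hlam0])
  have halam : ∀ i, a i ≤ μ i / lam := fun i =>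
    div_le_div_of_nonneg_left (hμpos i).le hlam0 (by linarith [hμpos i])
  -- L
  set L : ℝ := -Real.log lam / (2*γ) with hLdef
  have hloglam : Real.log lam ≤ -1 := by
    have h := Real.log_le_log hlam0 hlamle
    rwa [Real.log_exp] at h
  have hL0 : 0 < L := div_pos (by linarith) hγ2
  have hlamL : lam = Real.exp (-(2*γ)*L) := by
    have harg : -(2*γ)*L = Real.log lam := by rw [hLdef]; field_simp
    rw [harg, Real.exp_log hlam0]
  -- summability of μ-weighted sums
  have hsummu : ∀ k : ℕ, Summable (fun i : ℕ => ((i:ℝ)+1)^k * μ i) := by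
    intro k
    refine (summable_aux (2*γ) hγ2 k).congr (fun i => ?_)
    have : -(2*γ) * ((i:ℝ)+1) = -2*γ*((i:ℝ)+1) := by ring
    simp only [hμdef, this]
  have hsumA : ∀ k : ℕ, Summable (fun i : ℕ => ((i:ℝ)+1)^k * a i) := by
    intro k
    refine Summable.of_nonneg_of_le (fun i => mul_nonneg (by positivity) (ha0 i))
      (fun i => ?_) ((hsummu k).mul_right lam⁻¹)
    calc ((i:ℝ)+1)^k * a i ≤ ((i:ℝ)+1)^k * (μ i / lam) :=
          mul_le_mul_of_nonneg_left (halam i) (by positivity)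
      _ = ((i:ℝ)+1)^k * μ i * lam⁻¹ := by ring
  set A0 : ℝ := ∑' i : ℕ, a i with hA0def
  set Am : ℝ := ∑' i : ℕ, ((i:ℝ)+1)^(2*m) * a i with hAmdef
  have hA0sum : Summable a := by
    have := hsumA 0
    simpa using this
  have hAmsum : Summable (fun i : ℕ => ((i:ℝ)+1)^(2*m) * a i) := hsumA (2*m)
  have hA0nonneg : 0 ≤ A0 := tsum_nonneg ha0
  have hAmnonneg : 0 ≤ Am := tsum_nonneg (fun i => mul_nonneg (by positivity) (ha0 i))
  -- S bound
  set S : ℝ := 2^(2*m) * (L^(2*m) + K) with hSdef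
  have hS0 : 0 ≤ S := by
    have := pow_nonneg hL0.le (2*m)
    positivity
  have hSb : ∀ i : ℕ, ((i:ℝ)+1)^(2*m) * a i ≤ S := by
    intro i
    set t : ℝ := (i:ℝ)+1 with htdef
    have ht1 : (1:ℝ) ≤ t := by
      have : (0:ℝ) ≤ (i:ℝ) := Nat.cast_nonneg i
      simp only [htdef]; linarith
    have h2m : (1:ℝ) ≤ 2^(2*m) := by
      calc (1:ℝ) = 1^(2*m) := (one_pow _).symm
        _ ≤ 2^(2*m) := pow_le_pow_left₀ (by norm_num) (by norm_num) _
    rcases le_or_gt t L with hcase | hcase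
    · have h1 : t^(2*m) * a i ≤ t^(2*m) * 1 :=
        mul_le_mul_of_nonneg_left (ha1 i) (by positivity)
      have h3 : t^(2*m) ≤ L^(2*m) := pow_le_pow_left₀ (by linarith) hcase _
      have h4 : L^(2*m) + K ≤ 2^(2*m) * (L^(2*m)+K) := by
        apply le_mul_of_one_le_left _ h2m
        have := pow_nonneg hL0.le (2*m)
        linarith
      calc t^(2*m) * a i ≤ t^(2*m) := by linarith
        _ ≤ L^(2*m) := h3
        _ ≤ S := by rw [hSdef]; linarith
    · set s : ℝ := t - L with hsdef
      have hs0 : 0 < s := by simp only [hsdef]; linarith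
      have hale : a i ≤ Real.exp (-(2*γ*s)) := by
        have heq : μ i / lam = Real.exp (-(2*γ*s)) := by
          rw [hlamL]
          simp only [hμdef, ← Real.exp_sub]
          congr 1
          simp only [hsdef, htdef]; ring
        rw [← heq]; exact halam i
      have hmax : t ≤ 2 * max L s := by
        have h1 := le_max_left L s
        have h2 := le_max_right L s
        have : t = L + s := by simp only [hsdef]; ring
        linarith
      have hts : t^(2*m) ≤ 2^(2*m) * (L^(2*m) + s^(2*m)) := by
        calc t^(2*m) ≤ (2 * max L s)^(2*m) := pow_le_pow_left₀ (by linarith) hmax _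
          _ = 2^(2*m) * (max L s)^(2*m) := mul_pow 2 (max L s) (2*m)
          _ ≤ 2^(2*m) * (L^(2*m) + s^(2*m)) := by
              apply mul_le_mul_of_nonneg_left _ (by positivity)
              rcases max_cases L s with ⟨h1,_⟩|⟨h1,_⟩ <;> rw [h1]
              · nlinarith [pow_nonneg hs0.le (2*m)]
              · nlinarith [pow_nonneg hL0.le (2*m)]
      have hK1 : s^(2*m) * Real.exp (-(2*γ*s)) ≤ K := by
        have h := pow_mul_exp_neg_le (2*m) (2*γ) s hγ2 hs0.le
        rw [hKdef]
        exact h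
      have hE1 : Real.exp (-(2*γ*s)) ≤ 1 :=
        Real.exp_le_one_iff.mpr (by nlinarith)
      have hLm0 : (0:ℝ) ≤ L^(2*m) := pow_nonneg hL0.le _
      calc t^(2*m) * a i ≤ t^(2*m) * Real.exp (-(2*γ*s)) :=
            mul_le_mul_of_nonneg_left hale (by positivity)
        _ ≤ (2^(2*m) * (L^(2*m) + s^(2*m))) * Real.exp (-(2*γ*s)) :=
            mul_le_mul_of_nonneg_right hts (Real.exp_nonneg _)
        _ = 2^(2*m) * (L^(2*m) * Real.exp (-(2*γ*s)) + s^(2*m) * Real.exp (-(2*γ*s))) := by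
            ring
        _ ≤ 2^(2*m) * (L^(2*m) + K) := by
            apply mul_le_mul_of_nonneg_left _ (by positivity)
            have h1 : L^(2*m) * Real.exp (-(2*γ*s)) ≤ L^(2*m) :=
              mul_le_of_le_one_right hLm0 hE1
            linarith [hK1]
        _ = S := rfl
  -- A0 upper bound
  have hA0le : A0 ≤ (1 + D) * (L + 1) := by
    set N : ℕ := ⌈L⌉₊ with hNdef
    have hsplit := hA0sum.sum_add_tsum_nat_add N
    have h1 : ∑ i ∈ Finset.range N, a i ≤ (N : ℝ) := by
      calc ∑ i ∈ Finset.range N, a i ≤ ∑ i ∈ Finset.range N, (1:ℝ) :=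
            Finset.sum_le_sum (fun i _ => ha1 i)
        _ = (N : ℝ) := by simp
    have hNgeL : L ≤ (N : ℝ) := Nat.le_ceil L
    have hterm : ∀ i : ℕ, a (i + N) ≤ Real.exp (-(2*γ)) * Real.exp (-(2*γ))^i := by
      intro i
      have he : Real.exp (-(2*γ)) * Real.exp (-(2*γ))^i = Real.exp (-(2*γ)*((i:ℝ)+1)) := by
        rw [← Real.exp_nat_mul, ← Real.exp_add]
        congr 1; ring
      rw [he]
      calc a (i + N) ≤ μ (i + N) / lam := halam _
        _ = Real.exp (-2*γ*(((i+N:ℕ):ℝ)+1) - (-(2*γ)*L)) := by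
            rw [hlamL, hμdef, ← Real.exp_sub]
        _ ≤ Real.exp (-(2*γ)*((i:ℝ)+1)) := by
            apply Real.exp_le_exp.mpr
            push_cast
            nlinarith [hNgeL, hγ2]
    have hgs : Summable (fun i : ℕ => Real.exp (-(2*γ)) * Real.exp (-(2*γ))^i) :=
      (summable_geometric_of_lt_one (Real.exp_nonneg _) hlt1).mul_left _
    have h2 : ∑' i : ℕ, a (i + N) ≤ D := by
      calc ∑' i : ℕ, a (i + N) ≤ ∑' i : ℕ, Real.exp (-(2*γ)) * Real.exp (-(2*γ))^i :=
            Summable.tsum_le_tsum hterm ((summable_nat_add_iff N).mpr hA0sum) hgs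
        _ = Real.exp (-(2*γ)) * (1 - Real.exp (-(2*γ)))⁻¹ := by
            rw [tsum_mul_left, tsum_geometric_of_lt_one (Real.exp_nonneg _) hlt1]
        _ = D := hDdef.symm
    have hNle : (N : ℝ) ≤ L + 1 := (Nat.ceil_lt_add_one hL0.le).le
    have hA0eq : A0 = ∑ i ∈ Finset.range N, a i + ∑' i : ℕ, a (i + N) := by
      rw [hA0def, ← hsplit]
    nlinarith [mul_nonneg hD0 hL0.le]
  -- Am lower bound
  have hAmge : c3 * (L+1)^(2*m+1) ≤ Am := by
    have hAmterm0 : ∀ i : ℕ, 0 ≤ ((i:ℝ)+1)^(2*m) * a i :=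
      fun i => mul_nonneg (by positivity) (ha0 i)
    rcases le_or_gt 1 L with hL1 | hL1
    · set N : ℕ := ⌊L⌋₊ with hNdef
      have hNL : (N:ℝ) ≤ L := Nat.floor_le hL0.le
      have hN1 : 1 ≤ N := Nat.le_floor (by exact_mod_cast hL1)
      have hhalf : ∀ i, i < N → 1/2 ≤ a i := by
        intro i hi
        have hti : (i:ℝ)+1 ≤ L := by
          have h1 : ((i+1 : ℕ):ℝ) ≤ (N:ℝ) := by exact_mod_cast Nat.succ_le_of_lt hi
          push_cast at h1
          linarith
        have hμge : lam ≤ μ i := by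
          rw [hlamL, hμdef]
          apply Real.exp_le_exp.mpr
          nlinarith [hγ2]
        rw [hadef]
        rw [le_div_iff₀ (hd i)]
        linarith
      have hsumlow : (N:ℝ)^(2*m+1) / (((2*m:ℕ):ℝ)+1) / 2 ≤ Am := by
        have h3 := sum_pow_ge (2*m) N
        have h1 : ∑ i ∈ Finset.range N, ((i:ℝ)+1)^(2*m) * (1/2) ≤
            ∑ i ∈ Finset.range N, ((i:ℝ)+1)^(2*m) * a i :=
          Finset.sum_le_sum (fun i hi =>
            mul_le_mul_of_nonneg_left (hhalf i (Finset.mem_range.mp hi)) (by positivity))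
        have h2 : ∑ i ∈ Finset.range N, ((i:ℝ)+1)^(2*m) * a i ≤ Am :=
          hAmdef ▸ Summable.sum_le_tsum _ (fun i _ => hAmterm0 i) hAmsum
        have h4 : ∑ i ∈ Finset.range N, ((i:ℝ)+1)^(2*m) * (1/2) =
            (∑ i ∈ Finset.range N, ((i:ℝ)+1)^(2*m)) / 2 := by
          rw [Finset.sum_div]
          exact Finset.sum_congr rfl (fun i _ => by ring)
        have hm1 : (0:ℝ) < ((2*m:ℕ):ℝ)+1 := by positivity
        have h5 : (N:ℝ)^(2*m+1) / (((2*m:ℕ):ℝ)+1) ≤ ∑ i ∈ Finset.range N, ((i:ℝ)+1)^(2*m) := by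
          rw [div_le_iff₀ hm1]
          calc (N:ℝ)^(2*m+1) ≤ (((2*m:ℕ):ℝ)+1) * ∑ i ∈ Finset.range N, ((i:ℝ)+1)^(2*m) := by
                have := sum_pow_ge (2*m) N
                push_cast at this ⊢
                linarith
            _ = (∑ i ∈ Finset.range N, ((i:ℝ)+1)^(2*m)) * (((2*m:ℕ):ℝ)+1) := by ring
        linarith
      -- N ≥ L/2, so (L+1) ≤ 4N
      have hN2 : L/2 ≤ (N:ℝ) := by
        rcases le_or_gt L 2 with h | h
        · have h1 : (1:ℝ) ≤ (N:ℝ) := by exact_mod_cast hN1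
          linarith
        · have h1 := Nat.lt_floor_add_one L
          rw [← hNdef] at h1
          linarith
      have h4 : (L+1)^(2*m+1) ≤ 4^(2*m+1) * (N:ℝ)^(2*m+1) := by
        have hle : L + 1 ≤ 4*(N:ℝ) := by linarith
        calc (L+1)^(2*m+1) ≤ (4*(N:ℝ))^(2*m+1) := pow_le_pow_left₀ (by linarith) hle _
          _ = 4^(2*m+1) * (N:ℝ)^(2*m+1) := mul_pow 4 (N:ℝ) (2*m+1)
      have hc3le : c3 ≤ 1 / (4^(2*m+1) * (2*(((2*m:ℕ):ℝ)+1))) := min_le_left _ _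
      calc c3 * (L+1)^(2*m+1)
          ≤ (1 / (4^(2*m+1) * (2*(((2*m:ℕ):ℝ)+1)))) * (4^(2*m+1) * (N:ℝ)^(2*m+1)) := by
            apply mul_le_mul hc3le h4 (by positivity) (by positivity)
        _ = (N:ℝ)^(2*m+1) / (((2*m:ℕ):ℝ)+1) / 2 := by
            field_simp
        _ ≤ Am := hsumlow
    · -- L < 1 case
      have hμ0 : μ 0 = Real.exp (-(2*γ)) := by
        rw [hμdef]
        norm_num
      have ha0c : c4 ≤ a 0 := by
        have heq : a 0 = Real.exp (-(2*γ)) / (lam + Real.exp (-(2*γ))) := by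
          rw [show a 0 = μ 0 / (lam + μ 0) from rfl, hμ0]
        rw [heq, hc4def]
        apply div_le_div_of_nonneg_left (Real.exp_nonneg _) (by positivity)
        linarith
      have hAm0 : a 0 ≤ Am := by
        have h := Summable.le_tsum hAmsum 0 (fun j _ => hAmterm0 j)
        rw [hAmdef]
        calc a 0 = ((0:ℝ)+1)^(2*m) * a 0 := by norm_num
          _ ≤ _ := by exact_mod_cast h
      have h5 : (L+1)^(2*m+1) ≤ 2^(2*m+1) :=
        pow_le_pow_left₀ (by linarith) (by linarith) _
      have hc3le : c3 ≤ c4 / 2^(2*m+1) := min_le_right _ _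
      calc c3 * (L+1)^(2*m+1) ≤ (c4 / 2^(2*m+1)) * 2^(2*m+1) := by
            apply mul_le_mul hc3le h5 (by positivity) (by positivity)
        _ = c4 := by field_simp
        _ ≤ Am := le_trans ha0c hAm0
  -- glue
  set R : ℝ := ∑' i : ℕ, f i ^ 2 * (lam + Real.exp (-2 * γ * ((i:ℝ) + 1))) *
      Real.exp (2 * γ * ((i:ℝ) + 1)) with hRdef
  set T : ℝ := ∑' i : ℕ, f i ^ 2 * ((i:ℝ) + 1) ^ (2 * m) with hTdef
  have hRterm0 : ∀ i : ℕ, 0 ≤ f i ^ 2 * (lam + Real.exp (-2*γ*((i:ℝ)+1))) *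
      Real.exp (2*γ*((i:ℝ)+1)) := fun i => by positivity
  have hR0 : 0 ≤ R := hRdef ▸ tsum_nonneg hRterm0
  have hone : ∀ i : ℕ, (lam + Real.exp (-2*γ*((i:ℝ)+1))) * Real.exp (2*γ*((i:ℝ)+1)) * a i = 1 := by
    intro i
    have hexp : Real.exp (2*γ*((i:ℝ)+1)) * Real.exp (-2*γ*((i:ℝ)+1)) = 1 := by
      rw [← Real.exp_add, show 2*γ*((i:ℝ)+1) + -2*γ*((i:ℝ)+1) = 0 by ring, Real.exp_zero]
    have hai : a i = Real.exp (-2*γ*((i:ℝ)+1)) / (lam + Real.exp (-2*γ*((i:ℝ)+1))) := rfl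
    calc (lam + Real.exp (-2*γ*((i:ℝ)+1))) * Real.exp (2*γ*((i:ℝ)+1)) * a i
        = Real.exp (2*γ*((i:ℝ)+1)) * Real.exp (-2*γ*((i:ℝ)+1)) *
            ((lam + Real.exp (-2*γ*((i:ℝ)+1))) / (lam + Real.exp (-2*γ*((i:ℝ)+1)))) := by
          rw [hai]; ring
      _ = Real.exp (2*γ*((i:ℝ)+1)) * Real.exp (-2*γ*((i:ℝ)+1)) := by
          rw [div_self (hd i).ne', mul_one]
      _ = 1 := hexp
  have htb : ∀ i : ℕ, f i ^ 2 * ((i:ℝ)+1)^(2*m) ≤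
      f i ^ 2 * (lam + Real.exp (-2*γ*((i:ℝ)+1))) * Real.exp (2*γ*((i:ℝ)+1)) * S := by
    intro i
    have h1 : f i ^ 2 * ((i:ℝ)+1)^(2*m) =
        (f i ^ 2 * (lam + Real.exp (-2*γ*((i:ℝ)+1))) * Real.exp (2*γ*((i:ℝ)+1))) *
          (((i:ℝ)+1)^(2*m) * a i) := by
      calc f i ^ 2 * ((i:ℝ)+1)^(2*m)
          = f i ^ 2 * ((i:ℝ)+1)^(2*m) *
              ((lam + Real.exp (-2*γ*((i:ℝ)+1))) * Real.exp (2*γ*((i:ℝ)+1)) * a i) := by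
            rw [hone i, mul_one]
        _ = _ := by ring
    rw [h1]
    exact mul_le_mul_of_nonneg_left (hSb i) (by positivity)
  have hTsum : Summable (fun i : ℕ => f i ^ 2 * ((i:ℝ)+1)^(2*m)) :=
    Summable.of_nonneg_of_le (fun i => by positivity) htb (hf.mul_right S)
  have hT : T ≤ R * S := by
    rw [hTdef, hRdef, ← tsum_mul_right]
    exact Summable.tsum_le_tsum htb hTsum (hf.mul_right S)
  have hgA0 : (∑' i : ℕ, ((i:ℝ)+1)^(2*0) * Real.exp (-2*γ*((i:ℝ)+1)) /
      (lam + Real.exp (-2*γ*((i:ℝ)+1)))) = A0 := by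
    rw [hA0def]
    refine tsum_congr (fun i => ?_)
    show ((i:ℝ)+1)^(2*0) * μ i / (lam + μ i) = a i
    rw [show a i = μ i / (lam + μ i) from rfl]
    norm_num
  have hgAm : (∑' i : ℕ, ((i:ℝ)+1)^(2*m) * Real.exp (-2*γ*((i:ℝ)+1)) /
      (lam + Real.exp (-2*γ*((i:ℝ)+1)))) = Am := by
    rw [hAmdef]
    refine tsum_congr (fun i => ?_)
    show ((i:ℝ)+1)^(2*m) * μ i / (lam + μ i) = ((i:ℝ)+1)^(2*m) * a i
    rw [show a i = μ i / (lam + μ i) from rfl, mul_div_assoc]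
  rw [hgA0, hgAm]
  have hLp : (1:ℝ) ≤ (L+1)^(2*m) := by
    calc (1:ℝ) = 1^(2*m) := (one_pow _).symm
      _ ≤ (L+1)^(2*m) := pow_le_pow_left₀ (by norm_num) (by linarith) _
  have hS2 : S ≤ 2^(2*m) * (1+K) * (L+1)^(2*m) := by
    have h1 : L^(2*m) ≤ (L+1)^(2*m) := pow_le_pow_left₀ hL0.le (by linarith) _
    have h2 : K ≤ K * (L+1)^(2*m) := le_mul_of_one_le_right hK0 hLp
    calc S = 2^(2*m) * (L^(2*m) + K) := hSdef
      _ ≤ 2^(2*m) * ((L+1)^(2*m) + K*(L+1)^(2*m)) := by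
          apply mul_le_mul_of_nonneg_left _ (by positivity)
          linarith
      _ = 2^(2*m) * (1+K) * (L+1)^(2*m) := by ring
  have hchain : A0 * S ≤ (C'/c3) * Am := by
    have h1 : A0 * S ≤ ((1+D)*(L+1)) * (2^(2*m)*(1+K)*(L+1)^(2*m)) :=
      mul_le_mul hA0le hS2 hS0 (mul_nonneg (by linarith) (by linarith))
    have h2 : ((1+D)*(L+1)) * (2^(2*m)*(1+K)*(L+1)^(2*m)) = C' * (L+1)^(2*m+1) := by
      rw [hC'def, pow_succ]; ring
    have h3 : (C'/c3) * (c3 * (L+1)^(2*m+1)) = C' * (L+1)^(2*m+1) := by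
      field_simp
    have h4 : (C'/c3) * (c3*(L+1)^(2*m+1)) ≤ (C'/c3) * Am :=
      mul_le_mul_of_nonneg_left hAmge (div_nonneg hC'0.le hc30.le)
    linarith
  calc A0 * T ≤ A0 * (R * S) := mul_le_mul_of_nonneg_left hT hA0nonneg
    _ = (A0 * S) * R := by ring
    _ ≤ ((C'/c3) * Am) * R := mul_le_mul_of_nonneg_right hchain hR0
    _ = C'/c3 * Am * R := by ring
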